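/- Let N be a Petri net with basis partition (T_E, T_I), T_I-induced subnet acyclic. A marking M ∈ ℕ^m is reachable from M_0 (M ∈ R(N, M_0)) if and only if there exists a basis marking M_b in the BRG with M ∈ R_I(M_b). -/

import Mathlib

/-- A Petri net with `m` places and `n` transitions. -/
structure PetriNet (m n : ℕ) where
  Pre : Fin m → Fin n → ℕ
  Post : Fin m → Fin n → ℕ

namespace PetriNet

variable {m n : ℕ}

/-- Incidence matrix `C = Post - Pre`. -/
def C (N : PetriNet m n) (p : Fin m) (t : Fin n) : ℤ :=
  (N.Post p t : ℤ) - (N.Pre p t : ℤ)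

/-- Transition `t` is enabled at marking `M`. -/
def enabled (N : PetriNet m n) (M : Fin m → ℕ) (t : Fin n) : Prop :=
  ∀ p, N.Pre p t ≤ M p

/-- Firing transition `t` at marking `M`. -/
def fire (N : PetriNet m n) (M : Fin m → ℕ) (t : Fin n) : Fin m → ℕ :=
  fun p => M p + N.Post p t - N.Pre p t

/-- `fires N M σ M'` : the sequence `σ` is firable at `M` and yields `M'`. -/
inductive fires (N : PetriNet m n) : (Fin m → ℕ) → List (Fin n) → (Fin m → ℕ) → Prop
  | nil (M : Fin m → ℕ) : fires N M [] M
  | cons {M M' : Fin m → ℕ} {t : Fin n} {σ : List (Fin n)} :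
      N.enabled M t → fires N (N.fire M t) σ M' → fires N M (t :: σ) M'

/-- Firing vector of a sequence. -/
def fvec (σ : List (Fin n)) : Fin n → ℕ := fun t => σ.count t

/-- Arcs of the subnet induced by transition set `TI` (full net for `TI = Set.univ`). -/
def arc (N : PetriNet m n) (TI : Set (Fin n)) :
    (Fin m ⊕ Fin n) → (Fin m ⊕ Fin n) → Prop
  | Sum.inl p, Sum.inr t => t ∈ TI ∧ 0 < N.Pre p t
  | Sum.inr t, Sum.inl p => t ∈ TI ∧ 0 < N.Post p t
  | _, _ => False

/-- The subnet induced by `TI` is acyclic: no directed cycle. -/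
def SubnetAcyclic (N : PetriNet m n) (TI : Set (Fin n)) : Prop :=
  ∀ x, ¬ Relation.TransGen (N.arc TI) x x

/-- Transitions in structural conflict. -/
def Tconf (N : PetriNet m n) : Set (Fin n) :=
  {t | ∃ p, 0 < N.Pre p t ∧ ∃ t', t' ≠ t ∧ 0 < N.Pre p t'}

/-- `TI` is non-conflicting: `TI ⊆ T \ T_conf`. -/
def NonConflicting (N : PetriNet m n) (TI : Set (Fin n)) : Prop :=
  ∀ t ∈ TI, t ∉ N.Tconf

/-- `TI` is non-increasing w.r.t. the GMEC weight vector `w`. -/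
def NonIncreasing (N : PetriNet m n) (w : Fin m → ℤ) (TI : Set (Fin n)) : Prop :=
  ∀ t ∈ TI, ∑ p, w p * N.C p t ≤ 0

/-- The `TI`-induced subnet is conflict-free: every place has at most one
output transition among `TI`. -/
def ConflictFreeSubnet (N : PetriNet m n) (TI : Set (Fin n)) : Prop :=
  ∀ p : Fin m, ∀ t ∈ TI, ∀ t' ∈ TI, 0 < N.Pre p t → 0 < N.Pre p t' → t = t'

/-- `σ` consists only of transitions in `TI`. -/
def ImplicitSeq (TI : Set (Fin n)) (σ : List (Fin n)) : Prop := ∀ t ∈ σ, t ∈ TI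

/-- Implicit reach of a marking `Mb`. -/
def RI (N : PetriNet m n) (TI : Set (Fin n)) (Mb : Fin m → ℕ) : Set (Fin m → ℕ) :=
  {M | ∃ σ, ImplicitSeq TI σ ∧ N.fires Mb σ M}

/-- Reachability set. -/
def Reach (N : PetriNet m n) (M0 : Fin m → ℕ) : Set (Fin m → ℕ) :=
  {M | ∃ σ, N.fires M0 σ M}

/-- State equation `M' = M + C·y` (the nonnegativity `M' ≥ 0` is implicit in
`M' : Fin m → ℕ`). -/
def stateEq (N : PetriNet m n) (M : Fin m → ℕ) (y : Fin n → ℕ) (M' : Fin m → ℕ) : Prop :=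
  ∀ p, (M' p : ℤ) = (M p : ℤ) + ∑ t, N.C p t * (y t : ℤ)

/-- `σ` is an explanation of `t` at `M`: an implicit sequence after which `t`
is enabled. -/
def IsExplanation (N : PetriNet m n) (TI : Set (Fin n)) (M : Fin m → ℕ)
    (t : Fin n) (σ : List (Fin n)) : Prop :=
  ImplicitSeq TI σ ∧ ∃ M', N.fires M σ M' ∧ N.enabled M' t

/-- `y` is a minimal explanation vector of `t` at `M`. -/
def MinExplVec (N : PetriNet m n) (TI : Set (Fin n)) (M : Fin m → ℕ)
    (t : Fin n) (y : Fin n → ℕ) : Prop :=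
  (∃ σ, N.IsExplanation TI M t σ ∧ fvec σ = y) ∧
    ∀ σ', N.IsExplanation TI M t σ' → ¬ fvec σ' < y

/-- `y` is the firing vector of some implicit sequence firable at `M`. -/
def FirableVec (N : PetriNet m n) (TI : Set (Fin n)) (M : Fin m → ℕ)
    (y : Fin n → ℕ) : Prop :=
  ∃ σ M', ImplicitSeq TI σ ∧ fvec σ = y ∧ N.fires M σ M'

/-- `y` is a maximal implicit firing vector at `M`. -/
def MaximalIFV (N : PetriNet m n) (TI : Set (Fin n)) (M : Fin m → ℕ)
    (y : Fin n → ℕ) : Prop :=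
  N.FirableVec TI M y ∧ ∀ y', N.FirableVec TI M y' → ¬ y < y'

/-- `y` is the maximal implicit firing vector at `M`, dominating all others. -/
def GreatestIFV (N : PetriNet m n) (TI : Set (Fin n)) (M : Fin m → ℕ)
    (y : Fin n → ℕ) : Prop :=
  N.FirableVec TI M y ∧ ∀ y', N.FirableVec TI M y' → y' ≤ y

/-- One step of the BRG: fire a minimal explanation followed by an explicit
transition `t ∉ TI`. -/
def BRGstep (N : PetriNet m n) (TI : Set (Fin n)) (M1 M2 : Fin m → ℕ) : Prop :=
  ∃ t ∉ TI, ∃ y, N.MinExplVec TI M1 t y ∧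
    ∀ p, (M2 p : ℤ) = (M1 p : ℤ) + (∑ s, N.C p s * (y s : ℤ)) + N.C p t

/-- `Mb` is a basis marking of the BRG with initial marking `M0`. -/
def Basis (N : PetriNet m n) (TI : Set (Fin n)) (M0 Mb : Fin m → ℕ) : Prop :=
  Relation.ReflTransGen (N.BRGstep TI) M0 Mb

/-- A marking is dead if it enables no transition. -/
def Dead (N : PetriNet m n) (M : Fin m → ℕ) : Prop := ∀ t, ¬ N.enabled M t

/-- Final markings of the GMEC `(w, k)`. -/
def Final (w : Fin m → ℤ) (k : ℤ) (M : Fin m → ℕ) : Prop :=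
  ∑ p, w p * (M p : ℤ) ≤ k

/-- The plant is non-blocking. -/
def NonBlocking (N : PetriNet m n) (M0 : Fin m → ℕ) (w : Fin m → ℤ) (k : ℤ) : Prop :=
  ∀ M ∈ N.Reach M0, ∃ M' ∈ N.Reach M, Final w k M'

/-- Boundedness of the marked net. -/
def Bounded (N : PetriNet m n) (M0 : Fin m → ℕ) : Prop :=
  ∃ K, ∀ M ∈ N.Reach M0, ∀ p, M p ≤ K

end PetriNet

namespace PetriNet

variable {m n : ℕ}

lemma fire_cast (N : PetriNet m n) {M : Fin m → ℕ} {t : Fin n} (h : N.enabled M t) (p : Fin m) :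
    ((N.fire M t p : ℤ)) = M p + N.C p t := by
  have h1 : N.Pre p t ≤ M p + N.Post p t := le_trans (h p) (Nat.le_add_right _ _)
  unfold fire C
  push_cast [Nat.cast_sub h1]
  ring

lemma fires_stateEq (N : PetriNet m n) {M M' : Fin m → ℕ} {σ : List (Fin n)}
    (h : N.fires M σ M') (p : Fin m) :
    (M' p : ℤ) = M p + ∑ t, N.C p t * (fvec σ t : ℤ) := by
  induction h generalizing p with
  | nil M => simp [fvec]
  | @cons M M' t σ he hf ih =>
    have step : ∀ s : Fin n, (fvec (t :: σ) s : ℤ) = fvec σ s + (if t = s then 1 else 0) := by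
      intro s; simp [fvec, List.count_cons]
    rw [ih p, fire_cast _ he p]
    have : ∑ s, N.C p s * (fvec (t :: σ) s : ℤ)
        = (∑ s, N.C p s * (fvec σ s : ℤ)) + N.C p t := by
      simp_rw [step, mul_add, Finset.sum_add_distrib, mul_ite, mul_one, mul_zero,
        Finset.sum_ite_eq, Finset.mem_univ, if_true]
    rw [this]; ring

lemma fires_append (N : PetriNet m n) {M M1 M2 : Fin m → ℕ} {σ1 σ2 : List (Fin n)}
    (h1 : N.fires M σ1 M1) (h2 : N.fires M1 σ2 M2) : N.fires M (σ1 ++ σ2) M2 := by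
  induction h1 with
  | nil => simpa
  | cons he hf ih => exact fires.cons he (ih h2)


lemma realize (N : PetriNet m n) (TI : Set (Fin n)) (hacyc : N.SubnetAcyclic TI) :
    ∀ k (y : Fin n → ℕ), (∑ t, y t) = k → (∀ t, 0 < y t → t ∈ TI) →
    ∀ M M' : Fin m → ℕ, (∀ p, (M' p : ℤ) = M p + ∑ t, N.C p t * y t) →
    ∃ σ, ImplicitSeq TI σ ∧ fvec σ = y ∧ N.fires M σ M' := by
  intro k
  induction k using Nat.strong_induction_on with
  | _ k ih =>
    intro y hk hsupp M M' hse
    by_cases hy0 : ∀ t, y t = 0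
    · have hMM : M = M' := by
        funext p
        have := hse p
        simp only [hy0, Nat.cast_zero, mul_zero, Finset.sum_const_zero, add_zero] at this
        exact_mod_cast this.symm
      subst hMM
      exact ⟨[], fun t ht => absurd ht (List.not_mem_nil (a := t)),
        funext fun t => by simp [fvec, (hy0 t).symm], fires.nil M⟩
    · push_neg at hy0
      obtain ⟨t1, ht1⟩ := hy0
      have ht1pos : 0 < y t1 := Nat.pos_of_ne_zero ht1
      set r : (Fin m ⊕ Fin n) → (Fin m ⊕ Fin n) → Prop :=
        Relation.TransGen (N.arc TI) with hr
      have wf : WellFounded r := by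
        have h1 : IsTrans _ r := ⟨fun a b c hab hbc => hab.trans hbc⟩
        have h2 : IsIrrefl _ r := ⟨hacyc⟩
        exact Finite.wellFounded_of_trans_of_irrefl r
      obtain ⟨x0, hx0S, hmin⟩ := wf.has_min {x | ∃ s, x = Sum.inr s ∧ 0 < y s}
        ⟨Sum.inr t1, t1, rfl, ht1pos⟩
      obtain ⟨t0, rfl, ht0pos⟩ := hx0S
      -- t0 is enabled at M
      have hpost : ∀ s, 0 < y s → ∀ p, 0 < N.Pre p t0 → N.Post p s = 0 := by
        intro s hs p hpre
        by_contra hps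
        have hps' : 0 < N.Post p s := Nat.pos_of_ne_zero hps
        have a1 : N.arc TI (Sum.inr s) (Sum.inl p) := ⟨hsupp s hs, hps'⟩
        have a2 : N.arc TI (Sum.inl p) (Sum.inr t0) := ⟨hsupp t0 ht0pos, hpre⟩
        exact hmin (Sum.inr s) ⟨s, rfl, hs⟩ ((Relation.TransGen.single a1).tail a2)
      have hen : N.enabled M t0 := by
        intro p
        rcases Nat.eq_zero_or_pos (N.Pre p t0) with hpre | hpre
        · omega
        · have h2 : ∑ t, (N.Post p t : ℤ) * y t = 0 := Finset.sum_eq_zero (fun t _ => by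
            rcases Nat.eq_zero_or_pos (y t) with h | h
            · simp [h]
            · simp [hpost t h p hpre])
          have h3 : ∑ t, N.C p t * (y t : ℤ)
              = ∑ t, (N.Post p t : ℤ) * y t - ∑ t, (N.Pre p t : ℤ) * y t := by
            rw [← Finset.sum_sub_distrib]
            exact Finset.sum_congr rfl fun t _ => by unfold C; ring
          have h4 : (M p : ℤ) = M' p + ∑ t, (N.Pre p t : ℤ) * y t := by
            have := hse p; rw [h3, h2] at this; linarith
          have h5 : (N.Pre p t0 : ℤ) * y t0 ≤ ∑ t, (N.Pre p t : ℤ) * y t :=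
            Finset.single_le_sum (f := fun t => (N.Pre p t : ℤ) * y t)
              (fun t _ => by positivity) (Finset.mem_univ t0)
          have h6 : (N.Pre p t0 : ℤ) ≤ (N.Pre p t0 : ℤ) * y t0 := by
            nlinarith [ht0pos, Int.ofNat_le.mpr ht0pos]
          have h7 : (0:ℤ) ≤ M' p := Int.ofNat_nonneg _
          have : (N.Pre p t0 : ℤ) ≤ M p := by linarith
          exact_mod_cast this
      -- fire t0 and recurse
      set y' : Fin n → ℕ := Function.update y t0 (y t0 - 1) with hy'
      have hy'le : ∀ s, y' s ≤ y s := by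
        intro s; by_cases h : s = t0 <;> simp [hy', Function.update, h]
      have hy't0 : y' t0 = y t0 - 1 := by simp [hy']
      have hy'ne : ∀ s, s ≠ t0 → y' s = y s := by
        intro s h; simp [hy', Function.update, h]
      have hsum' : ∑ t, y' t < k := by
        rw [← hk]
        apply Finset.sum_lt_sum (fun s _ => hy'le s) ⟨t0, Finset.mem_univ t0, by omega⟩
      have hcast : ∀ s, (y' s : ℤ) = y s - (if s = t0 then 1 else 0) := by
        intro s
        by_cases h : s = t0
        · subst h; rw [hy't0]; simp [Nat.cast_sub ht0pos]
        · simp [hy'ne s h, h]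
      have hse' : ∀ p, (M' p : ℤ) = (N.fire M t0 p : ℤ) + ∑ t, N.C p t * y' t := by
        intro p
        rw [fire_cast N hen p]
        have : ∑ t, N.C p t * (y' t : ℤ) = (∑ t, N.C p t * (y t : ℤ)) - N.C p t0 := by
          simp_rw [hcast, mul_sub, Finset.sum_sub_distrib, mul_ite, mul_one, mul_zero,
            Finset.sum_ite_eq', Finset.mem_univ, if_true]
        rw [this, hse p]; ring
      obtain ⟨σ', himp', hfv', hfir'⟩ := ih (∑ t, y' t) hsum' y' rfl
        (fun t ht => hsupp t (lt_of_lt_of_le ht (hy'le t))) (N.fire M t0) M' hse'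
      refine ⟨t0 :: σ', ?_, ?_, fires.cons hen hfir'⟩
      · intro t ht
        rcases List.mem_cons.mp ht with h | h
        · exact h ▸ hsupp t0 ht0pos
        · exact himp' t h
      · funext s
        have hc : fvec σ' s = y' s := congrFun hfv' s
        have hcount : List.count s (t0 :: σ') = List.count s σ' + (if s = t0 then 1 else 0) := by
          simp only [List.count_cons, beq_iff_eq]
          by_cases h : s = t0
          · simp [h]
          · simp [h, Ne.symm h]
        show List.count s (t0 :: σ') = y s
        rw [hcount, show List.count s σ' = y' s from hc]
        by_cases h : s = t0
        · rw [if_pos h, h, hy't0]; omega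
        · rw [if_neg h, hy'ne s h]; omega

def PNstep (N : PetriNet m n) (M M' : Fin m → ℕ) : Prop :=
  ∃ t, N.enabled M t ∧ N.fire M t = M'

lemma fires_iff_rtg (N : PetriNet m n) (M0 M : Fin m → ℕ) :
    (∃ σ, N.fires M0 σ M) ↔ Relation.ReflTransGen N.PNstep M0 M := by
  constructor
  · rintro ⟨σ, h⟩
    induction h with
    | nil => exact Relation.ReflTransGen.refl
    | cons he hf ih => exact Relation.ReflTransGen.head ⟨_, he, rfl⟩ ih
  · intro h
    induction h with
    | refl => exact ⟨[], fires.nil M0⟩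
    | tail hab hbc ih =>
      obtain ⟨σ, hσ⟩ := ih
      obtain ⟨t, he, hfire⟩ := hbc
      exact ⟨σ ++ [t], N.fires_append hσ (fires.cons he (hfire ▸ fires.nil _))⟩

lemma exists_minExplVec (N : PetriNet m n) (TI : Set (Fin n)) {Mb : Fin m → ℕ} {t : Fin n}
    {σI : List (Fin n)} (hexp : N.IsExplanation TI Mb t σI) :
    ∃ y, N.MinExplVec TI Mb t y ∧ y ≤ fvec σI := by
  classical
  have hA : ∃ k, ∃ σ', N.IsExplanation TI Mb t σ' ∧ fvec σ' ≤ fvec σI ∧ ∑ s, fvec σ' s = k :=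
    ⟨∑ s, fvec σI s, σI, hexp, le_refl _, rfl⟩
  obtain ⟨σy, hexpy, hley, hsum⟩ := Nat.find_spec hA
  refine ⟨fvec σy, ⟨⟨σy, hexpy, rfl⟩, ?_⟩, hley⟩
  intro σ' hσ' hlt
  have hle' : fvec σ' ≤ fvec σI := le_trans (le_of_lt hlt) hley
  have hsumlt : ∑ s, fvec σ' s < ∑ s, fvec σy s := by
    obtain ⟨hle, i, hi⟩ := Pi.lt_def.mp hlt
    exact Finset.sum_lt_sum (fun s _ => hle s) ⟨i, Finset.mem_univ i, hi⟩
  exact absurd ⟨σ', hσ', hle', rfl⟩ (Nat.find_min hA (hsum ▸ hsumlt))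

lemma brg_target_eq (N : PetriNet m n) {Mb My Mb2 : Fin m → ℕ} {σy : List (Fin n)} {t : Fin n}
    (hf : N.fires Mb σy My) (he : N.enabled My t)
    (heq : ∀ p, (Mb2 p : ℤ) = Mb p + (∑ s, N.C p s * (fvec σy s : ℤ)) + N.C p t) :
    Mb2 = N.fire My t := by
  funext p
  have h1 := N.fires_stateEq hf p
  have h2 := N.fire_cast he p
  have : (Mb2 p : ℤ) = (N.fire My t p : ℤ) := by rw [heq p, h2, h1]
  exact_mod_cast this

end PetriNet

open PetriNet

/-- a marking is reachable iff it lies in the implicit reach of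
some basis marking of the BRG. -/
theorem reachable_iff_in_ri_of_basis {m n : ℕ} (N : PetriNet m n)
    (TI : Set (Fin n)) (hacyc : N.SubnetAcyclic TI)
    (M0 M : Fin m → ℕ) :
    M ∈ N.Reach M0 ↔ ∃ Mb, N.Basis TI M0 Mb ∧ M ∈ N.RI TI Mb := by
  constructor
  · -- forward
    rintro ⟨σ, hσ⟩
    have hrtg := (N.fires_iff_rtg M0 M).mp ⟨σ, hσ⟩
    clear hσ σ
    induction hrtg with
    | refl =>
      exact ⟨M0, Relation.ReflTransGen.refl, [], fun t ht => absurd ht (List.not_mem_nil (a := t)),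
        fires.nil M0⟩
    | @tail b c hab hbc ih =>
      obtain ⟨Mb, hb, σI, himpI, hfI⟩ := ih
      obtain ⟨t, he, hfire⟩ := hbc
      by_cases htI : t ∈ TI
      · exact ⟨Mb, hb, σI ++ [t], fun s hs => (List.mem_append.mp hs).elim (himpI s)
          (fun h => (List.mem_singleton.mp h) ▸ htI),
          N.fires_append hfI (fires.cons he (hfire ▸ fires.nil _))⟩
      · have hexp : N.IsExplanation TI Mb t σI := ⟨himpI, b, hfI, he⟩
        obtain ⟨y, hminy, hyle⟩ := N.exists_minExplVec TI hexp
        obtain ⟨⟨σy, hexpy, hfvy⟩, hminy2⟩ := hminy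
        obtain ⟨himpy, My, hfy, heny⟩ := hexpy
        set Mb' : Fin m → ℕ := N.fire My t with hMb'
        have heqMb' : ∀ p, (Mb' p : ℤ) = Mb p + (∑ s, N.C p s * (y s : ℤ)) + N.C p t := by
          intro p
          rw [hMb', N.fire_cast heny p, N.fires_stateEq hfy p, hfvy]
        have hstep : N.BRGstep TI Mb Mb' := ⟨t, htI, y, ⟨⟨σy, ⟨himpy, My, hfy, heny⟩, hfvy⟩,
          hminy2⟩, heqMb'⟩
        have hbasis' : N.Basis TI M0 Mb' := hb.tail hstep
        -- residual vector
        set r : Fin n → ℕ := fun s => fvec σI s - y s with hrdef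
        have hrsupp : ∀ s, 0 < r s → s ∈ TI := by
          intro s hs
          have hrs : r s = fvec σI s - y s := rfl
          rw [hrs] at hs
          have : 0 < fvec σI s := by omega
          exact himpI s (List.count_pos_iff.mp this)
        have hrcast : ∀ s, (r s : ℤ) = (fvec σI s : ℤ) - y s := by
          intro s
          have hrs : r s = fvec σI s - y s := rfl
          rw [hrs, Nat.cast_sub (hyle s)]
        have hse : ∀ p, (c p : ℤ) = Mb' p + ∑ s, N.C p s * (r s : ℤ) := by
          intro p
          have h1 : (c p : ℤ) = b p + N.C p t := hfire ▸ N.fire_cast he p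
          have h2 := N.fires_stateEq hfI p
          have h3 := heqMb' p
          have h4 : ∑ s, N.C p s * (r s : ℤ)
              = (∑ s, N.C p s * (fvec σI s : ℤ)) - ∑ s, N.C p s * (y s : ℤ) := by
            rw [← Finset.sum_sub_distrib]
            exact Finset.sum_congr rfl fun s _ => by rw [hrcast s]; ring
          rw [h1, h2, h3, h4]; ring
        obtain ⟨τ, himpτ, _, hfirτ⟩ := N.realize TI hacyc (∑ s, r s) r rfl hrsupp Mb' c hse
        exact ⟨Mb', hbasis', τ, himpτ, hfirτ⟩
  · -- backward
    rintro ⟨Mb, hbasis, σ, _, hfσ⟩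
    have hMb : ∃ ρ, N.fires M0 ρ Mb := by
      clear hfσ
      induction hbasis with
      | refl => exact ⟨[], fires.nil M0⟩
      | @tail b c hab hbc ih =>
        obtain ⟨ρ, hρ⟩ := ih
        obtain ⟨t, _, y, ⟨⟨σy, ⟨himpy, My, hfy, heny⟩, hfvy⟩, _⟩, heq⟩ := hbc
        have heq' : ∀ p, (c p : ℤ) = b p + (∑ s, N.C p s * (fvec σy s : ℤ)) + N.C p t := by
          intro p; rw [heq p, hfvy]
        have hc : c = N.fire My t := N.brg_target_eq hfy heny heq'
        exact ⟨ρ ++ (σy ++ [t]),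
          N.fires_append hρ (N.fires_append hfy (fires.cons heny (hc ▸ fires.nil _)))⟩
    obtain ⟨ρ, hρ⟩ := hMb
    exact ⟨ρ ++ σ, N.fires_append hρ hfσ⟩
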